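/- Let μ₁ be a probability measure on the space of functions ({A₁,A₂,B₁,B₂,C₁} → Bool) and μ₂ a probability measure on the space of functions ({A₁,A₂,B₁,B₂,C₂} → Bool), where A₁, A₂, B₁, B₂, C₁, C₂ are six distinct labels. Then there exists a probability measure μ on the space of functions ({A₁,A₂,B₁,B₂,C₁,C₂} → Bool) whose pushforwards under restriction to the two five-element label sets are μ₁ and μ₂ respectively, if and only if the pushforwards of μ₁ and μ₂ under restriction to {A₁,A₂,B₁,B₂} coincide. -/

import Mathlib

open MeasureTheory
open scoped ENNReal

def restrictConfig {α : Type*} {S T : Finset α} (hST : S ⊆ T) (f : ↥T → Bool) (x : ↥S) : Bool :=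
  f ⟨x.1, hST x.2⟩

lemma glue_side {Ω Ω₁ Ω₂ Ω₀ : Type*}
    [MeasurableSpace Ω] [MeasurableSpace Ω₁] [MeasurableSpace Ω₂] [MeasurableSpace Ω₀]
    [Countable Ω] [Countable Ω₁] [Countable Ω₂]
    [MeasurableSingletonClass Ω] [MeasurableSingletonClass Ω₁]
    [MeasurableSingletonClass Ω₂] [MeasurableSingletonClass Ω₀]
    (r₁ : Ω → Ω₁) (r₂ : Ω → Ω₂) (p₁ : Ω₁ → Ω₀) (p₂ : Ω₂ → Ω₀)
    (hcomp : ∀ g, p₁ (r₁ g) = p₂ (r₂ g))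
    (hinj : Function.Injective fun g => (r₁ g, r₂ g))
    (hsurj : ∀ f₁ f₂, p₁ f₁ = p₂ f₂ → ∃ g, r₁ g = f₁ ∧ r₂ g = f₂)
    (μ₁ : Measure Ω₁) (μ₂ : Measure Ω₂) [IsProbabilityMeasure μ₂]
    (hm : μ₁.map p₁ = μ₂.map p₂)
    (w : Ω → ℝ≥0∞)
    (hw : ∀ g, w g = μ₁ {r₁ g} * μ₂ {r₂ g} / (μ₁.map p₁) {p₁ (r₁ g)}) :
    (Measure.sum fun g => w g • Measure.dirac g).map r₁ = μ₁ := by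
  refine Measure.ext_of_singleton fun f₁ => ?_
  have hr₁ : Measurable r₁ := measurable_of_countable r₁
  have hs : MeasurableSet (r₁ ⁻¹' {f₁}) := hr₁ (measurableSet_singleton f₁)
  rw [Measure.map_apply hr₁ (measurableSet_singleton f₁), Measure.sum_apply _ hs]
  have hsum : ∀ g, (w g • Measure.dirac g) (r₁ ⁻¹' {f₁})
      = (r₁ ⁻¹' {f₁}).indicator w g := by
    intro g
    rw [Measure.smul_apply, Measure.dirac_apply' _ hs, smul_eq_mul]
    by_cases hg : g ∈ r₁ ⁻¹' {f₁} <;> simp [Set.indicator_apply, hg]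
  simp_rw [hsum]
  rw [← tsum_subtype]
  set ν : ℝ≥0∞ := (μ₁.map p₁) {p₁ f₁} with hν
  classical
  let ψ : ↥(r₁ ⁻¹' {f₁}) → {f₂ // p₂ f₂ = p₁ f₁} := fun g =>
    ⟨r₂ g.1, by rw [← hcomp g.1, show r₁ g.1 = f₁ from g.2]⟩
  have hψ : Function.Bijective ψ := by
    constructor
    · intro g g' h
      apply Subtype.ext
      apply hinj
      have h2 : r₂ g.1 = r₂ g'.1 := congrArg Subtype.val h
      have h1 : r₁ g.1 = r₁ g'.1 := by
        rw [show r₁ g.1 = f₁ from g.2, show r₁ g'.1 = f₁ from g'.2]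
      exact Prod.ext h1 h2
    · rintro ⟨f₂, hf₂⟩
      obtain ⟨g, hg1, hg2⟩ := hsurj f₁ f₂ hf₂.symm
      exact ⟨⟨g, hg1⟩, Subtype.ext hg2⟩
  let e := Equiv.ofBijective ψ hψ
  rw [← Equiv.tsum_eq e.symm (fun g : ↥(r₁ ⁻¹' {f₁}) => w g.1)]
  have key : ∀ b : {f₂ // p₂ f₂ = p₁ f₁}, w (e.symm b).1 = μ₁ {f₁} / ν * μ₂ {b.1} := by
    intro b
    have hg1 : r₁ (e.symm b).1 = f₁ := (e.symm b).2
    have hg2 : r₂ (e.symm b).1 = b.1 := congrArg Subtype.val (e.apply_symm_apply b)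
    rw [hw, hg1, hg2, div_eq_mul_inv, div_eq_mul_inv, mul_right_comm]
  simp_rw [key]
  rw [ENNReal.tsum_mul_left]
  have hsub : ∑' (b : {f₂ // p₂ f₂ = p₁ f₁}), μ₂ {b.1} = ν := by
    have h1 : ∑' (b : ↥(p₂ ⁻¹' {p₁ f₁})), μ₂ {b.1} = μ₂ (p₂ ⁻¹' {p₁ f₁}) := by
      exact (tsum_subtype (p₂ ⁻¹' {p₁ f₁}) (fun y => μ₂ {y})).trans
        (Measure.tsum_indicator_apply_singleton μ₂ _
          ((measurable_of_countable p₂) (measurableSet_singleton _)))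
    have h2 : μ₂ (p₂ ⁻¹' {p₁ f₁}) = ν := by
      rw [hν, hm, Measure.map_apply (measurable_of_countable p₂) (measurableSet_singleton _)]
    exact h1.trans h2
  rw [hsub]
  by_cases h0 : ν = 0
  · have hle : μ₁ {f₁} ≤ ν := by
      rw [hν, Measure.map_apply (measurable_of_countable p₁) (measurableSet_singleton _)]
      exact measure_mono (fun y hy => by simp_all)
    have : μ₁ {f₁} = 0 := le_antisymm (h0 ▸ hle) zero_le
    simp [this, h0]
  · have hν_top : ν ≠ ⊤ := by
      rw [hν, hm]
      have : IsProbabilityMeasure (μ₂.map p₂) :=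
        Measure.isProbabilityMeasure_map (measurable_of_countable p₂).aemeasurable
      exact measure_ne_top _ _
    exact ENNReal.div_mul_cancel h0 hν_top

lemma glue_exists {Ω Ω₁ Ω₂ Ω₀ : Type*}
    [MeasurableSpace Ω] [MeasurableSpace Ω₁] [MeasurableSpace Ω₂] [MeasurableSpace Ω₀]
    [Countable Ω] [Countable Ω₁] [Countable Ω₂]
    [MeasurableSingletonClass Ω] [MeasurableSingletonClass Ω₁]
    [MeasurableSingletonClass Ω₂] [MeasurableSingletonClass Ω₀]
    (r₁ : Ω → Ω₁) (r₂ : Ω → Ω₂) (p₁ : Ω₁ → Ω₀) (p₂ : Ω₂ → Ω₀)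
    (hcomp : ∀ g, p₁ (r₁ g) = p₂ (r₂ g))
    (hinj : Function.Injective fun g => (r₁ g, r₂ g))
    (hsurj : ∀ f₁ f₂, p₁ f₁ = p₂ f₂ → ∃ g, r₁ g = f₁ ∧ r₂ g = f₂)
    (μ₁ : Measure Ω₁) (μ₂ : Measure Ω₂)
    [IsProbabilityMeasure μ₁] [IsProbabilityMeasure μ₂]
    (hm : μ₁.map p₁ = μ₂.map p₂) :
    ∃ μ : Measure Ω, IsProbabilityMeasure μ ∧ μ.map r₁ = μ₁ ∧ μ.map r₂ = μ₂ := by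
  set w : Ω → ℝ≥0∞ := fun g => μ₁ {r₁ g} * μ₂ {r₂ g} / (μ₁.map p₁) {p₁ (r₁ g)} with hwdef
  set μ := Measure.sum fun g => w g • Measure.dirac g with hμ
  have h1 : μ.map r₁ = μ₁ :=
    glue_side r₁ r₂ p₁ p₂ hcomp hinj hsurj μ₁ μ₂ hm w (fun g => rfl)
  have hinj' : Function.Injective fun g => (r₂ g, r₁ g) := by
    intro a b h
    apply hinj
    simp only [Prod.mk.injEq] at h ⊢
    exact ⟨h.2, h.1⟩
  have h2 : μ.map r₂ = μ₂ := by
    refine glue_side r₂ r₁ p₂ p₁ (fun g => (hcomp g).symm) hinj'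
      (fun f₂ f₁ h => (hsurj f₁ f₂ h.symm).imp fun g hg => ⟨hg.2, hg.1⟩) μ₂ μ₁ hm.symm w
      (fun g => ?_)
    rw [hwdef]
    dsimp only
    rw [← hm, hcomp g, mul_comm]
  have hμuniv : μ Set.univ = 1 := by
    have h := Measure.map_apply (μ := μ) (measurable_of_countable r₁) MeasurableSet.univ
    rw [h1, Set.preimage_univ] at h
    rw [← h]
    exact measure_univ
  exact ⟨μ, ⟨hμuniv⟩, h1, h2⟩

set_option maxHeartbeats 1000000 in
theorem stmt_18 {α : Type*} [DecidableEq α] (A₁ A₂ B₁ B₂ C₁ C₂ : α)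
    (hd : A₁ ≠ A₂ ∧ A₁ ≠ B₁ ∧ A₁ ≠ B₂ ∧ A₁ ≠ C₁ ∧ A₁ ≠ C₂ ∧
          A₂ ≠ B₁ ∧ A₂ ≠ B₂ ∧ A₂ ≠ C₁ ∧ A₂ ≠ C₂ ∧
          B₁ ≠ B₂ ∧ B₁ ≠ C₁ ∧ B₁ ≠ C₂ ∧ B₂ ≠ C₁ ∧ B₂ ≠ C₂ ∧ C₁ ≠ C₂)
    (μ₁ : Measure (↥({A₁, A₂, B₁, B₂, C₁} : Finset α) → Bool))
    (μ₂ : Measure (↥({A₁, A₂, B₁, B₂, C₂} : Finset α) → Bool))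
    [IsProbabilityMeasure μ₁] [IsProbabilityMeasure μ₂] :
    (∃ μ : Measure (↥({A₁, A₂, B₁, B₂, C₁, C₂} : Finset α) → Bool), IsProbabilityMeasure μ ∧
      μ.map (restrictConfig (S := {A₁, A₂, B₁, B₂, C₁})
        (by intro x hx; simp only [Finset.mem_insert, Finset.mem_singleton] at hx ⊢; tauto)) = μ₁ ∧
      μ.map (restrictConfig (S := {A₁, A₂, B₁, B₂, C₂})
        (by intro x hx; simp only [Finset.mem_insert, Finset.mem_singleton] at hx ⊢; tauto)) = μ₂)
    ↔
    μ₁.map (restrictConfig (S := {A₁, A₂, B₁, B₂})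
        (by intro x hx; simp only [Finset.mem_insert, Finset.mem_singleton] at hx ⊢; tauto)) =
    μ₂.map (restrictConfig (S := {A₁, A₂, B₁, B₂})
        (by intro x hx; simp only [Finset.mem_insert, Finset.mem_singleton] at hx ⊢; tauto)) := by
  obtain ⟨h12, h13, h14, h15, h16, h23, h24, h25, h26, h34, h35, h36, h45, h46, h56⟩ := hd
  classical
  have hS₁T : ({A₁, A₂, B₁, B₂, C₁} : Finset α) ⊆ {A₁, A₂, B₁, B₂, C₁, C₂} := by
    intro x hx; simp only [Finset.mem_insert, Finset.mem_singleton] at hx ⊢; tauto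
  have hS₂T : ({A₁, A₂, B₁, B₂, C₂} : Finset α) ⊆ {A₁, A₂, B₁, B₂, C₁, C₂} := by
    intro x hx; simp only [Finset.mem_insert, Finset.mem_singleton] at hx ⊢; tauto
  have hS₀₁ : ({A₁, A₂, B₁, B₂} : Finset α) ⊆ {A₁, A₂, B₁, B₂, C₁} := by
    intro x hx; simp only [Finset.mem_insert, Finset.mem_singleton] at hx ⊢; tauto
  have hS₀₂ : ({A₁, A₂, B₁, B₂} : Finset α) ⊆ {A₁, A₂, B₁, B₂, C₂} := by
    intro x hx; simp only [Finset.mem_insert, Finset.mem_singleton] at hx ⊢; tauto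
  set r₁ := restrictConfig hS₁T with hr₁def
  set r₂ := restrictConfig hS₂T with hr₂def
  set p₁ := restrictConfig hS₀₁ with hp₁def
  set p₂ := restrictConfig hS₀₂ with hp₂def
  have hcomp : ∀ g, p₁ (r₁ g) = p₂ (r₂ g) := fun g => rfl
  have hinj : Function.Injective
      (fun g : (↥({A₁, A₂, B₁, B₂, C₁, C₂} : Finset α) → Bool) => (r₁ g, r₂ g)) := by
    intro g g' h
    simp only [Prod.mk.injEq] at h
    funext x
    by_cases hx1 : x.1 ∈ ({A₁, A₂, B₁, B₂, C₁} : Finset α)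
    · exact congrFun h.1 ⟨x.1, hx1⟩
    · have hx2 : x.1 ∈ ({A₁, A₂, B₁, B₂, C₂} : Finset α) := by
        have hx := x.2
        simp only [Finset.mem_insert, Finset.mem_singleton] at hx hx1 ⊢
        tauto
      exact congrFun h.2 ⟨x.1, hx2⟩
  have hsurj : ∀ f₁ f₂, p₁ f₁ = p₂ f₂ → ∃ g, r₁ g = f₁ ∧ r₂ g = f₂ := by
    intro f₁ f₂ hcompat
    refine ⟨fun x => if hx1 : x.1 ∈ ({A₁, A₂, B₁, B₂, C₁} : Finset α) then f₁ ⟨x.1, hx1⟩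
      else f₂ ⟨x.1, by
        have hx := x.2
        simp only [Finset.mem_insert, Finset.mem_singleton] at hx hx1 ⊢
        tauto⟩, ?_, ?_⟩
    · funext x
      simp only [hr₁def, restrictConfig]
      rw [dif_pos x.2]
    · funext x
      simp only [hr₂def, restrictConfig]
      by_cases hx1 : x.1 ∈ ({A₁, A₂, B₁, B₂, C₁} : Finset α)
      · rw [dif_pos hx1]
        have hx0 : x.1 ∈ ({A₁, A₂, B₁, B₂} : Finset α) := by
          have hx := x.2
          simp only [Finset.mem_insert, Finset.mem_singleton] at hx hx1 ⊢
          rcases hx1 with h|h|h|h|h <;> simp only [h] at hx ⊢ <;> tauto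
        exact congrFun hcompat ⟨x.1, hx0⟩
      · rw [dif_neg hx1]
  constructor
  · rintro ⟨μ, hμ, hm1, hm2⟩
    rw [← hm1, ← hm2,
      Measure.map_map (measurable_of_countable _) (measurable_of_countable _),
      Measure.map_map (measurable_of_countable _) (measurable_of_countable _)]
    congr 1
  · intro hm
    exact glue_exists r₁ r₂ p₁ p₂ hcomp hinj hsurj μ₁ μ₂ hm
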